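/- Let θ ∈ (0,π/2), S the circle centered at (0, 1/sin θ) with radius cos θ/sin θ, and J := S ∩ B̄(0,1) the arc of S inside the closed unit disc. Define F(z) := 2z/(1+|z|²). Then F(J) is contained in the chord segment [a, b] joining a = (−cos θ, sin θ) and b = (cos θ, sin θ), and F maps J onto this chord. -/

import Mathlib

open Real
set_option maxHeartbeats 1000000

/-- The map `F(z) = 2z / (1 + |z|²)` on `ℝ²` (Euclidean norm). -/
noncomputable def stmt18F (p : ℝ × ℝ) : ℝ × ℝ :=
  (2 * p.1 / (1 + (p.1 ^ 2 + p.2 ^ 2)), 2 * p.2 / (1 + (p.1 ^ 2 + p.2 ^ 2)))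

lemma stmt18_seg_mem {c s t : ℝ} (hc : 0 < c) (h1 : -c ≤ t) (h2 : t ≤ c) :
    ((t, s) : ℝ × ℝ) ∈ segment ℝ ((-c, s) : ℝ × ℝ) (c, s) := by
  refine ⟨(c - t)/(2*c), (t + c)/(2*c), div_nonneg (by linarith) (by linarith),
    div_nonneg (by linarith) (by linarith), by field_simp; ring, ?_⟩
  have h : ((c - t)/(2*c)) • ((-c, s) : ℝ × ℝ) + ((t + c)/(2*c)) • ((c, s) : ℝ × ℝ)
      = (((c - t)/(2*c)) * (-c) + ((t + c)/(2*c)) * c,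
         ((c - t)/(2*c)) * s + ((t + c)/(2*c)) * s) := rfl
  rw [h, Prod.mk.injEq]
  constructor <;> field_simp <;> ring

theorem stmt_18 (θ : ℝ) (hθ : θ ∈ Set.Ioo 0 (π / 2)) :
    stmt18F '' ({p : ℝ × ℝ | p.1 ^ 2 + (p.2 - 1 / sin θ) ^ 2 = (cos θ / sin θ) ^ 2} ∩
        {p : ℝ × ℝ | p.1 ^ 2 + p.2 ^ 2 ≤ 1})
      = segment ℝ ((-cos θ, sin θ)) ((cos θ, sin θ)) := by
  obtain ⟨hθ0, hθ1⟩ := hθ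
  set s := sin θ with hs_def
  set c := cos θ with hc_def
  have hs : 0 < s := sin_pos_of_pos_of_lt_pi hθ0 (by linarith [pi_pos])
  have hc : 0 < c := cos_pos_of_mem_Ioo ⟨by linarith [pi_pos], hθ1⟩
  have hsc : s ^ 2 + c ^ 2 = 1 := by rw [hs_def, hc_def]; exact sin_sq_add_cos_sq θ
  have hs0 : s ≠ 0 := ne_of_gt hs
  clear_value s c
  ext q
  constructor
  · rintro ⟨p, ⟨hcirc, hdisc⟩, rfl⟩
    simp only [Set.mem_setOf_eq] at hcirc hdisc
    -- circle equation cleared of denominators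
    have hq : s ^ 2 * p.1 ^ 2 + (s * p.2 - 1) ^ 2 = c ^ 2 := by
      have h1' : s ^ 2 * (p.1 ^ 2 + (p.2 - 1 / s) ^ 2) = s ^ 2 * (c / s) ^ 2 := by
        rw [hcirc]
      have e1 : s ^ 2 * (p.1 ^ 2 + (p.2 - 1 / s) ^ 2)
          = s ^ 2 * p.1 ^ 2 + (s * p.2 - 1) ^ 2 := by field_simp
      have e2 : s ^ 2 * (c / s) ^ 2 = c ^ 2 := by field_simp
      rw [e1, e2] at h1'
      exact h1'
    have hkey : s * (p.1 ^ 2 + p.2 ^ 2) = 2 * p.2 - s := by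
      apply mul_left_cancel₀ hs0
      linear_combination hq + hsc
    have hy : 0 < p.2 := by
      nlinarith [hq, sq_nonneg p.1, hsc, mul_pos hs hs, sq_nonneg s]
    have hden : 1 + (p.1 ^ 2 + p.2 ^ 2) = 2 * p.2 / s := by
      field_simp
      linear_combination hkey
    have hF : stmt18F p = (s * p.1 / p.2, s) := by
      unfold stmt18F
      rw [hden, Prod.mk.injEq]
      constructor <;> field_simp <;> ring
    rw [hF]
    have hbound : s ^ 2 * p.1 ^ 2 ≤ c ^ 2 * p.2 ^ 2 := by
      nlinarith [sq_nonneg (p.2 - s), hq, hsc]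
    have ht2 : (s * p.1 / p.2) ^ 2 ≤ c ^ 2 := by
      rw [div_pow, div_le_iff₀ (by positivity)]
      nlinarith [hbound]
    exact stmt18_seg_mem hc
      (by nlinarith [ht2, sq_nonneg (s * p.1 / p.2 + c)])
      (by nlinarith [ht2, sq_nonneg (s * p.1 / p.2 - c)])
  · rintro ⟨a, b, ha, hb, hab, hq⟩
    have hq2 : q.2 = s := by
      have h2 : (a • ((-c, s) : ℝ × ℝ) + b • ((c, s) : ℝ × ℝ)).2 = a * s + b * s := rfl
      rw [hq] at h2
      rw [h2]; linear_combination s * hab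
    have hq1 : q.1 = (b - a) * c := by
      have h1 : (a • ((-c, s) : ℝ × ℝ) + b • ((c, s) : ℝ × ℝ)).1 = a * (-c) + b * c := rfl
      rw [hq] at h1
      rw [h1]; ring
    set t := q.1 with ht_def
    clear_value t
    have h4 : t ^ 2 = c ^ 2 - 4 * (a * b) * c ^ 2 := by
      rw [hq1]; linear_combination (c ^ 2 * (a + b + 1)) * hab
    have ht_le : t ^ 2 ≤ c ^ 2 := by
      nlinarith [mul_nonneg (mul_nonneg ha hb) (sq_nonneg c)]
    set r := Real.sqrt (c ^ 2 - t ^ 2) with hr_def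
    have hr0 : 0 ≤ r := Real.sqrt_nonneg _
    have hr2 : r ^ 2 = c ^ 2 - t ^ 2 := Real.sq_sqrt (by linarith)
    have h1r : (0:ℝ) < 1 + r := by linarith
    clear_value r
    have key : s ^ 2 * t ^ 2 + (c ^ 2 + r) ^ 2 = c ^ 2 * (1 + r) ^ 2 := by
      linear_combination t ^ 2 * hsc + (1 - c ^ 2) * hr2
    have hts : t ^ 2 + s ^ 2 = 1 - r ^ 2 := by linear_combination hsc + hr2
    refine ⟨(t / (1 + r), s / (1 + r)), ⟨?_, ?_⟩, ?_⟩
    · show (t / (1+r)) ^ 2 + (s / (1+r) - 1 / s) ^ 2 = (c / s) ^ 2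
      have e : s / (1+r) - 1 / s = -(c^2+r)/(s*(1+r)) := by
        field_simp
        linear_combination hsc
      rw [e]
      have e2 : (t/(1+r))^2 + (-(c^2+r)/(s*(1+r)))^2
          = (s^2*t^2+(c^2+r)^2)/(s^2*(1+r)^2) := by
        field_simp
      rw [e2, key, div_pow]
      field_simp
    · show (t / (1+r)) ^ 2 + (s / (1+r)) ^ 2 ≤ 1
      rw [div_pow, div_pow, ← add_div, div_le_one (by positivity)]
      nlinarith [hts, hr0]
    · show (2 * (t / (1+r)) / (1 + ((t / (1+r)) ^ 2 + (s / (1+r)) ^ 2)),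
            2 * (s / (1+r)) / (1 + ((t / (1+r)) ^ 2 + (s / (1+r)) ^ 2))) = q
      have hden : 1 + ((t / (1+r)) ^ 2 + (s / (1+r)) ^ 2) = 2 / (1 + r) := by
        rw [div_pow, div_pow, ← add_div]
        rw [hts]
        field_simp
        ring
      rw [hden]
      have e1 : 2 * (t / (1+r)) / (2 / (1+r)) = t := by field_simp
      have e2 : 2 * (s / (1+r)) / (2 / (1+r)) = s := by field_simp
      rw [e1, e2, ht_def, ← hq2]
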